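/- Let D be an n×n nonnegative real demand matrix, let δ > 0 and s ≥ 1, and consider any schedule of D over s parallel switches with reconfiguration delay δ that covers D. If some row or some column of D has k_i ≥ 1 nonzero entries whose sum is w_i, then the makespan of the schedule is at least w_i/s + δ. -/

import Mathlib

open Finset

/-- A configuration of an optical switch: a permutation of the `n` ports
together with a (time) weight. -/
abbrev Config (n : ℕ) := Equiv.Perm (Fin n) × ℝ

/-- A schedule over `s` parallel switches assigns to each switch a finite
list of configurations. -/
abbrev Schedule (n s : ℕ) := Fin s → List (Config n)

/-- All configuration weights of the schedule are positive. -/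
def ValidWeights {n s : ℕ} (S : Schedule n s) : Prop :=
  ∀ h : Fin s, ∀ c ∈ S h, 0 < c.2

/-- Total weight of all configurations (over all switches) servicing entry `(i, j)`,
i.e. whose permutation maps `i` to `j`. -/
def servedWeight {n s : ℕ} (S : Schedule n s) (i j : Fin n) : ℝ :=
  ∑ h : Fin s, (((S h).filter (fun c => decide (c.1 i = j))).map Prod.snd).sum

/-- The schedule covers the demand matrix `D`. -/
def Covers {n s : ℕ} (D : Matrix (Fin n) (Fin n) ℝ) (S : Schedule n s) : Prop :=
  ∀ i j : Fin n, D i j ≤ servedWeight S i j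

/-- The load of switch `h`: each configuration contributes the reconfiguration
delay `δ` plus its weight. -/
def load {n s : ℕ} (δ : ℝ) (S : Schedule n s) (h : Fin s) : ℝ :=
  ((S h).map (fun c => δ + c.2)).sum

/-- The makespan of the schedule: the maximum load over the switches. -/
noncomputable def makespan {n s : ℕ} (δ : ℝ) (S : Schedule n s) : ℝ :=
  ⨆ h : Fin s, load δ S h


lemma sum_filter_classify {n : ℕ} (L : List (Config n)) (q : Config n → Fin n) :
    ∑ x : Fin n, ((L.filter (fun c => decide (q c = x))).map Prod.snd).sum
      = (L.map Prod.snd).sum := by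
  induction L with
  | nil => simp
  | cons c L ih =>
    have key : ∀ x : Fin n,
        (((c :: L).filter (fun c => decide (q c = x))).map Prod.snd).sum
          = (if q c = x then c.2 else 0)
            + ((L.filter (fun c => decide (q c = x))).map Prod.snd).sum := by
      intro x
      by_cases h : q c = x <;> simp [List.filter_cons, h]
    simp only [key, Finset.sum_add_distrib, ih, Finset.sum_ite_eq, Finset.mem_univ, if_true,
      List.map_cons, List.sum_cons]

lemma load_eq {n s : ℕ} (δ : ℝ) (S : Schedule n s) (h : Fin s) :
    load δ S h = δ * (S h).length + ((S h).map Prod.snd).sum := by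
  unfold load
  induction S h with
  | nil => simp
  | cons c L ih => simp [ih]; ring

lemma aux_makespan {n s : ℕ} (hs : 1 ≤ s) (δ : ℝ) (hδ : 0 < δ) (S : Schedule n s)
    (hval : ValidWeights S) (q : Config n → Fin n) (f : Fin n → ℝ)
    (hf : ∀ x, f x ≤ ∑ h : Fin s,
      (((S h).filter (fun c => decide (q c = x))).map Prod.snd).sum)
    (hone : ∃ x, 0 < f x) :
    (∑ x, f x) / s + δ ≤ makespan δ S := by
  set M := makespan δ S with hM
  have hspos : (0 : ℝ) < s := by exact_mod_cast hs
  have hload_le : ∀ h : Fin s, load δ S h ≤ M :=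
    fun h => le_ciSup (Set.Finite.bddAbove (Set.finite_range _)) h
  -- there is a nonempty switch
  obtain ⟨x₀, hx₀⟩ := hone
  have hx := lt_of_lt_of_le hx₀ (hf x₀)
  have hnonneg : ∀ h : Fin s,
      0 ≤ (((S h).filter (fun c => decide (q c = x₀))).map Prod.snd).sum := by
    intro h
    apply List.sum_nonneg
    intro a ha
    simp only [List.mem_map] at ha
    obtain ⟨c, hc, rfl⟩ := ha
    exact le_of_lt (hval h c (List.mem_of_mem_filter hc))
  obtain ⟨h₀, hh₀⟩ : ∃ h : Fin s,
      0 < (((S h).filter (fun c => decide (q c = x₀))).map Prod.snd).sum := by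
    by_contra hcon
    push_neg at hcon
    have : ∑ h : Fin s, (((S h).filter (fun c => decide (q c = x₀))).map Prod.snd).sum ≤ 0 :=
      Finset.sum_nonpos (fun h _ => hcon h)
    linarith
  have hne : ∃ c, c ∈ S h₀ := by
    rcases hfe : (S h₀).filter (fun c => decide (q c = x₀)) with _ | ⟨c, t⟩
    · rw [hfe] at hh₀; simp at hh₀
    · exact ⟨c, List.mem_of_mem_filter (hfe ▸ (List.mem_cons_self : c ∈ c :: t))⟩
  obtain ⟨c₀, hc₀⟩ := hne
  have hδM : δ ≤ M - 0 := by
    have h1 : δ + c₀.2 ≤ load δ S h₀ := by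
      apply List.single_le_sum
      · intro y hy
        simp only [List.mem_map] at hy
        obtain ⟨c, hc, rfl⟩ := hy
        exact le_of_lt (add_pos hδ (hval h₀ c hc))
      · exact List.mem_map_of_mem hc₀
    have := hval h₀ c₀ hc₀
    have := hload_le h₀
    linarith
  rw [sub_zero] at hδM
  -- each switch weight sum ≤ M - δ
  have hW : ∀ h : Fin s, ((S h).map Prod.snd).sum ≤ M - δ := by
    intro h
    have h1 : δ * (S h).length + ((S h).map Prod.snd).sum ≤ M := by
      rw [← load_eq]; exact hload_le h
    rcases hSh : S h with _ | ⟨c, t⟩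
    · simp; linarith
    · rw [hSh] at h1
      have h2 : (1 : ℝ) ≤ ((c :: t).length : ℕ) := by
        exact_mod_cast Nat.succ_le_succ (Nat.zero_le _)
      nlinarith
  have hsum : ∑ x, f x ≤ s * (M - δ) := by
    calc ∑ x, f x ≤ ∑ x : Fin n, ∑ h : Fin s,
          (((S h).filter (fun c => decide (q c = x))).map Prod.snd).sum :=
          Finset.sum_le_sum (fun x _ => hf x)
      _ = ∑ h : Fin s, ∑ x : Fin n,
          (((S h).filter (fun c => decide (q c = x))).map Prod.snd).sum :=
          Finset.sum_comm
      _ = ∑ h : Fin s, ((S h).map Prod.snd).sum := by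
          exact Finset.sum_congr rfl (fun h _ => sum_filter_classify _ _)
      _ ≤ ∑ _h : Fin s, (M - δ) := Finset.sum_le_sum (fun h _ => hW h)
      _ = s * (M - δ) := by simp [mul_comm]; ring
  have : (∑ x, f x) / s ≤ M - δ := by
    rw [div_le_iff₀ hspos]
    linarith [hsum]
  linarith


/-- If some row or some column of `D` has `k ≥ 1` nonzero entries whose sum is
`w`, then the makespan of any covering schedule over `s` parallel switches with
reconfiguration delay `δ > 0` is at least `w/s + δ`. -/
theorem makespan_ge_avg_weight_add_delta {n s : ℕ} (hs : 1 ≤ s)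
    (D : Matrix (Fin n) (Fin n) ℝ) (hD : ∀ i j, 0 ≤ D i j)
    (δ : ℝ) (hδ : 0 < δ)
    (S : Schedule n s) (hval : ValidWeights S) (hcov : Covers D S)
    (k : ℕ) (hk : 1 ≤ k) (w : ℝ)
    (hrc :
      (∃ i, (univ.filter fun j => D i j ≠ 0).card = k ∧
        ∑ j ∈ univ.filter (fun j => D i j ≠ 0), D i j = w) ∨
      (∃ j, (univ.filter fun i => D i j ≠ 0).card = k ∧
        ∑ i ∈ univ.filter (fun i => D i j ≠ 0), D i j = w)) :
    w / s + δ ≤ makespan δ S := by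
  rcases hrc with ⟨i, hcard, hsum⟩ | ⟨j, hcard, hsum⟩
  · have hw : ∑ x, D i x = w := by rw [← hsum, Finset.sum_filter_ne_zero]
    obtain ⟨j, hj⟩ : ∃ j, D i j ≠ 0 := by
      have : (univ.filter fun j => D i j ≠ 0).Nonempty :=
        Finset.card_pos.mp (by omega)
      obtain ⟨j, hj⟩ := this
      exact ⟨j, (Finset.mem_filter.mp hj).2⟩
    have := aux_makespan hs δ hδ S hval (fun c => c.1 i) (fun x => D i x)
      (fun x => hcov i x)
      ⟨j, lt_of_le_of_ne (hD i j) (Ne.symm hj)⟩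
    rwa [hw] at this
  · have hw : ∑ x, D x j = w := by rw [← hsum, Finset.sum_filter_ne_zero]
    obtain ⟨i, hi⟩ : ∃ i, D i j ≠ 0 := by
      have : (univ.filter fun i => D i j ≠ 0).Nonempty :=
        Finset.card_pos.mp (by omega)
      obtain ⟨i, hi⟩ := this
      exact ⟨i, (Finset.mem_filter.mp hi).2⟩
    have hpred : ∀ x : Fin n, (fun c : Config n => decide (c.1 x = j))
        = (fun c : Config n => decide (c.1.symm j = x)) := by
      intro x; funext c
      apply decide_eq_decide.mpr
      rw [Equiv.symm_apply_eq]; exact eq_comm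
    have := aux_makespan hs δ hδ S hval (fun c => c.1.symm j) (fun x => D x j)
      (fun x => by have h := hcov x j; unfold servedWeight at h; rw [hpred x] at h; exact h)
      ⟨i, lt_of_le_of_ne (hD i j) (Ne.symm hi)⟩
    rwa [hw] at this
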